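/- arXiv:1510.03688 — 2 statements merged into one kernel-verified Lean document; each statement's English description precedes it below -/
import Mathlib

section
/- In a local Moufang set with Hua maps h_x := τ μ_x for units x (where τ is a fixed μ-map), the following identities hold for all units x, y: (1) μ_{x h_y} = h_y^{-1} μ_x h_y; (2) h_{xτ} = τ^{-1} h_{-x} τ; (3) h_{x h_y} = h_{-y} h_{xτ}^{-1} h_y. -/
open Equiv

structure LocalMoufangSet (X : Type*) where
  r : X → X → Prop
  requiv : Equivalence r
  U : X → Subgroup (Equiv.Perm X)
  preserves : ∀ x : X, ∀ u ∈ U x, ∀ a b : X, r a b ↔ r (u a) (u b)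
  big : ∃ a b c : X, ¬ r a b ∧ ¬ r b c ∧ ¬ r a c
  lm1 : ∀ x y : X, r x y → ∀ u ∈ U x, ∃ v ∈ U y, ∀ z : X, r (u z) (v z)
  lm2_fix : ∀ x : X, ∀ u ∈ U x, u x = x
  lm2_trans : ∀ x y z : X, ¬ r y x → ¬ r z x → ∃! u : Equiv.Perm X, u ∈ U x ∧ u y = z
  lm2'_trans : ∀ x y z : X, ¬ r y x → ¬ r z x → ∃ u ∈ U x, r (u y) z
  lm2'_free : ∀ x : X, ∀ u ∈ U x, ∀ y : X, ¬ r y x → r (u y) y → ∀ z : X, r (u z) z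
  lm3 : ∀ x : X, ∀ g ∈ (⨆ y : X, U y : Subgroup (Equiv.Perm X)),
      (U x).map (MulAut.conj g).toMonoidHom = U (g x)

namespace LocalMoufangSet

variable {X : Type*} (M : LocalMoufangSet X)

/-- The little projective group. -/
def G : Subgroup (Equiv.Perm X) := ⨆ x : X, M.U x

/-- `x` is a unit with respect to the base points `o` (zero) and `ι` (infinity). -/
def IsUnitPt (o ι x : X) : Prop := ¬ M.r x o ∧ ¬ M.r x ι

/-- `μ` is the μ-map of `x`: it lies in the double coset `U_0 α_x U_0` and swaps `o` and `ι`.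
(We use the left-action convention: a right product `g α h` corresponds to `h * α * g`.) -/
def IsMuMap (o ι x : X) (μ : Equiv.Perm X) : Prop :=
  μ o = ι ∧ μ ι = o ∧
    ∃ a ∈ M.U ι, a o = x ∧ ∃ g ∈ M.U o, ∃ h ∈ M.U o, μ = h * a * g

/-- Specialness with respect to a μ-map `τ`: `(-x)τ = -(xτ)` for all units `x`. -/
def Special (o ι : X) (τ : Equiv.Perm X) : Prop :=
  ∀ z : X, IsUnitPt M o ι z → ∀ a ∈ M.U ι, a o = z → ∀ b ∈ M.U ι, b o = τ z →
    τ (a⁻¹ o) = b⁻¹ o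

end LocalMoufangSet


theorem Equiv.Perm.inv_apply_self {α : Type*} (f : Equiv.Perm α) (x : α) : f⁻¹ (f x) = x :=
  f.symm_apply_apply x

theorem Equiv.Perm.apply_inv_self {α : Type*} (f : Equiv.Perm α) (x : α) : f (f⁻¹ x) = x :=
  f.apply_symm_apply x

namespace LocalMoufangSet

variable {X : Type*} (M : LocalMoufangSet X)

private lemma uniq_at (p : X) {y z : X} (hy : ¬ M.r y p) (hz : ¬ M.r z p)
    {u v : Equiv.Perm X} (hu : u ∈ M.U p) (hv : v ∈ M.U p)
    (huy : u y = z) (hvy : v y = z) : u = v := by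
  obtain ⟨w, -, hw⟩ := M.lm2_trans p y z hy hz
  rw [hw u ⟨hu, huy⟩, hw v ⟨hv, hvy⟩]

private lemma mem_G {x : X} {u : Equiv.Perm X} (hu : u ∈ M.U x) : u ∈ M.G :=
  le_iSup M.U x hu

private lemma conj_mem {g : Equiv.Perm X} (hg : g ∈ M.G) {x : X} {u : Equiv.Perm X}
    (hu : u ∈ M.U x) : g * u * g⁻¹ ∈ M.U (g x) := by
  rw [← M.lm3 x g hg]
  exact Subgroup.mem_map.mpr ⟨u, hu, rfl⟩

private lemma not_r_image {p : X} {u : Equiv.Perm X} (hu : u ∈ M.U p) {a b : X}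
    (h : ¬ M.r a b) : ¬ M.r (u a) (u b) := fun hr => h ((M.preserves p u hu a b).mpr hr)

/-- Structure of a μ-map: a decomposition with the induced pointwise relations. -/
private lemma mu_struct (o ι : X) {x : X} {μ : Equiv.Perm X}
    (hμ : M.IsMuMap o ι x μ) :
    ∃ h a g : Equiv.Perm X, h ∈ M.U o ∧ a ∈ M.U ι ∧ g ∈ M.U o ∧
      μ = h * a * g ∧ a o = x ∧ h x = ι ∧ g ι = a⁻¹ o := by
  obtain ⟨hμo, hμι, a, haU, hao, g, hgU, h, hhU, hdec⟩ := hμ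
  refine ⟨h, a, g, hhU, haU, hgU, hdec, hao, ?_, ?_⟩
  · have hgo : g o = o := M.lm2_fix o g hgU
    have h1 : (h * a * g) o = ι := hdec ▸ hμo
    simpa [Equiv.Perm.mul_apply, hgo, hao] using h1
  · have hho : h o = o := M.lm2_fix o h hhU
    have h1 : (h * a * g) ι = o := hdec ▸ hμι
    have h2 : h (a (g ι)) = h o := by
      simpa [Equiv.Perm.mul_apply, hho] using h1
    have h3 : a (g ι) = o := h.injective h2
    calc g ι = a⁻¹ (a (g ι)) := (Equiv.Perm.inv_apply_self a (g ι)).symm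
      _ = a⁻¹ o := by rw [h3]

/-- Uniqueness of the μ-map of a given point. -/
private lemma mu_unique (o ι : X) (h0 : ¬ M.r o ι) {x : X} {μ1 μ2 : Equiv.Perm X}
    (h1 : M.IsMuMap o ι x μ1) (h2 : M.IsMuMap o ι x μ2) : μ1 = μ2 := by
  obtain ⟨h, a, g, hhU, haU, hgU, hdec, hao, hhx, hgι⟩ := M.mu_struct o ι h1
  obtain ⟨h', a', g', hhU', haU', hgU', hdec', hao', hhx', hgι'⟩ := M.mu_struct o ι h2
  have h0' : ¬ M.r ι o := fun hr => h0 (M.requiv.symm hr)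
  have hxι : ¬ M.r x ι := by
    have := M.not_r_image haU h0
    rwa [hao, M.lm2_fix ι a haU] at this
  have haa : a = a' := M.uniq_at ι h0 hxι haU haU' hao hao'
  have hxo : ¬ M.r x o := by
    intro hr
    have := (M.preserves o h hhU x o).mp hr
    rw [hhx, M.lm2_fix o h hhU] at this
    exact h0' this
  have hhh : h = h' := M.uniq_at o hxo h0' hhU hhU' hhx hhx'
  have hnego : ¬ M.r (a⁻¹ o) o := by
    intro hr
    have := (M.preserves ι a haU (a⁻¹ o) o).mp hr
    rw [Equiv.Perm.apply_inv_self, hao] at this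
    exact hxo (M.requiv.symm this)
  have hgg : g = g' := by
    refine M.uniq_at o h0' hnego hgU hgU' hgι ?_
    rw [hgι', haa]
  rw [hdec, hdec', haa, hhh, hgg]

/-- Conjugation by an element of `G` fixing both base points. -/
private lemma mu_conj_fix (o ι : X) {x : X} {μ φ : Equiv.Perm X}
    (hφG : φ ∈ M.G) (hφo : φ o = o) (hφι : φ ι = ι)
    (hμ : M.IsMuMap o ι x μ) : M.IsMuMap o ι (φ x) (φ * μ * φ⁻¹) := by
  obtain ⟨h, a, g, hhU, haU, hgU, hdec, hao, -, -⟩ := M.mu_struct o ι hμ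
  obtain ⟨hμo, hμι, -⟩ := hμ
  have hφinvo : φ⁻¹ o = o :=
    φ.injective (by rw [Equiv.Perm.apply_inv_self, hφo])
  have hφinvι : φ⁻¹ ι = ι :=
    φ.injective (by rw [Equiv.Perm.apply_inv_self, hφι])
  refine ⟨?_, ?_, φ * a * φ⁻¹, ?_, ?_, φ * g * φ⁻¹, ?_, φ * h * φ⁻¹, ?_, ?_⟩
  · simp only [Equiv.Perm.mul_apply]; rw [hφinvo, hμo, hφι]
  · simp only [Equiv.Perm.mul_apply]; rw [hφinvι, hμι, hφo]
  · have := M.conj_mem hφG haU; rwa [hφι] at this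
  · simp only [Equiv.Perm.mul_apply]; rw [hφinvo, hao]
  · have := M.conj_mem hφG hgU; rwa [hφo] at this
  · have := M.conj_mem hφG hhU; rwa [hφo] at this
  · rw [hdec]; group

/-- `μ⁻¹` is a μ-map of `-x = β⁻¹ o`. -/
private lemma mu_inv (o ι : X) (h0 : ¬ M.r o ι) {x : X} {μ β : Equiv.Perm X}
    (hμ : M.IsMuMap o ι x μ) (hβU : β ∈ M.U ι) (hβo : β o = x) :
    M.IsMuMap o ι (β⁻¹ o) μ⁻¹ := by
  obtain ⟨h, a, g, hhU, haU, hgU, hdec, hao, -, -⟩ := M.mu_struct o ι hμ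
  obtain ⟨hμo, hμι, -⟩ := hμ
  have h0' : ¬ M.r ι o := fun hr => h0 (M.requiv.symm hr)
  have hxι : ¬ M.r x ι := by
    have := M.not_r_image hβU h0
    rwa [hβo, M.lm2_fix ι β hβU] at this
  have haβ : a = β := M.uniq_at ι h0 hxι haU hβU hao hβo
  refine ⟨?_, ?_, a⁻¹, inv_mem haU, ?_, h⁻¹, inv_mem hhU, g⁻¹, inv_mem hgU, ?_⟩
  · rw [← hμι, Equiv.Perm.inv_apply_self]
  · rw [← hμo, Equiv.Perm.inv_apply_self]
  · rw [haβ]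
  · rw [hdec]; group

/-- Conjugation by a swapping element of `G`: uses the dual decomposition
`μ = a * g * u` with `u ∈ U ι`, so that the conjugate is again in standard form
with middle value `φ (β⁻¹ o)`. -/
private lemma mu_conj_swap (o ι : X) (h0 : ¬ M.r o ι) {x : X} {μ φ β : Equiv.Perm X}
    (hφG : φ ∈ M.G) (hφo : φ o = ι) (hφι : φ ι = o)
    (hμ : M.IsMuMap o ι x μ) (hβU : β ∈ M.U ι) (hβo : β o = x) :
    M.IsMuMap o ι (φ (β⁻¹ o)) (φ * μ * φ⁻¹) := by
  obtain ⟨h, a, g, hhU, haU, hgU, hdec, hao, hhx, hgι⟩ := M.mu_struct o ι hμ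
  obtain ⟨hμo, hμι, -⟩ := hμ
  have h0' : ¬ M.r ι o := fun hr => h0 (M.requiv.symm hr)
  have hxι : ¬ M.r x ι := by
    have := M.not_r_image hβU h0
    rwa [hβo, M.lm2_fix ι β hβU] at this
  have haβ : a = β := M.uniq_at ι h0 hxι haU hβU hao hβo
  -- dual decomposition
  have hudec : μ = a * g * (g⁻¹ * (a⁻¹ * h * a) * g) := by rw [hdec]; group
  have huU : g⁻¹ * (a⁻¹ * h * a) * g ∈ M.U ι := by
    have h1 : a⁻¹ * h * a⁻¹⁻¹ ∈ M.U (a⁻¹ o) := M.conj_mem (inv_mem (M.mem_G haU)) hhU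
    rw [inv_inv] at h1
    have h2 : g⁻¹ * (a⁻¹ * h * a) * g⁻¹⁻¹ ∈ M.U (g⁻¹ (a⁻¹ o)) :=
      M.conj_mem (inv_mem (M.mem_G hgU)) h1
    rw [inv_inv] at h2
    have h3 : g⁻¹ (a⁻¹ o) = ι := by rw [← hgι, Equiv.Perm.inv_apply_self]
    rwa [h3] at h2
  have hφinvo : φ⁻¹ o = ι := by rw [← hφι, Equiv.Perm.inv_apply_self]
  have hφinvι : φ⁻¹ ι = o := by rw [← hφo, Equiv.Perm.inv_apply_self]
  refine ⟨?_, ?_, φ * g * φ⁻¹, ?_, ?_, φ * (g⁻¹ * (a⁻¹ * h * a) * g) * φ⁻¹, ?_,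
    φ * a * φ⁻¹, ?_, ?_⟩
  · simp only [Equiv.Perm.mul_apply]; rw [hφinvo, hμι, hφo]
  · simp only [Equiv.Perm.mul_apply]; rw [hφinvι, hμo, hφι]
  · have := M.conj_mem hφG hgU; rwa [hφo] at this
  · simp only [Equiv.Perm.mul_apply]; rw [hφinvo, hgι, haβ]
  · have := M.conj_mem hφG huU; rwa [hφι] at this
  · have := M.conj_mem hφG haU; rwa [hφι] at this
  · rw [hudec]; group

private lemma mu_mem_G (o ι : X) {x : X} {μ : Equiv.Perm X}
    (hμ : M.IsMuMap o ι x μ) : μ ∈ M.G := by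
  obtain ⟨-, -, a, haU, -, g, hgU, h, hhU, hdec⟩ := hμ
  rw [hdec]
  exact mul_mem (mul_mem (M.mem_G hhU) (M.mem_G haU)) (M.mem_G hgU)

end LocalMoufangSet

/-- identities for Hua maps `h_x = τ μ_x` (left convention: `μ_x * τ`,
i.e. first apply `τ`, then `μ_x`; and a right-convention conjugate `g^h = h⁻¹ g h`
becomes `h * g * h⁻¹`). -/



theorem stmt6 {X : Type*} (M : LocalMoufangSet X) (o ι : X) (h0 : ¬ M.r o ι)
    (e : X) (he : M.IsUnitPt o ι e)
    (τ : Equiv.Perm X) (hτ : M.IsMuMap o ι e τ)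
    (x : X) (hx : M.IsUnitPt o ι x)
    (α : Equiv.Perm X) (hαU : α ∈ M.U ι) (hαo : α o = x)
    (y : X) (hy : M.IsUnitPt o ι y)
    (αy : Equiv.Perm X) (hαyU : αy ∈ M.U ι) (hαyo : αy o = y)
    (μx μy : Equiv.Perm X)
    (hμx : M.IsMuMap o ι x μx) (hμy : M.IsMuMap o ι y μy) :
    -- (1) μ_{x h_y} = μ_x^{h_y}
    (∀ μ : Equiv.Perm X, M.IsMuMap o ι ((μy * τ) x) μ →
      μ = (μy * τ) * μx * (μy * τ)⁻¹) ∧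
    -- (2) h_{xτ} = h_{-x}^τ
    (∀ μxt μnx : Equiv.Perm X, M.IsMuMap o ι (τ x) μxt →
      M.IsMuMap o ι (α⁻¹ o) μnx →
      μxt * τ = τ * (μnx * τ) * τ⁻¹) ∧
    -- (3) h_{x h_y} = h_{-y} h_{xτ}⁻¹ h_y
    (∀ μ μxt μny : Equiv.Perm X, M.IsMuMap o ι ((μy * τ) x) μ →
      M.IsMuMap o ι (τ x) μxt → M.IsMuMap o ι (αy⁻¹ o) μny →
      μ * τ = (μy * τ) * (μxt * τ)⁻¹ * (μny * τ)) := by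
  have hτG : τ ∈ M.G := M.mu_mem_G o ι hτ
  have hτo : τ o = ι := hτ.1
  have hτι : τ ι = o := hτ.2.1
  have hμyG : μy ∈ M.G := M.mu_mem_G o ι hμy
  have hμyo : μy o = ι := hμy.1
  have hμyι : μy ι = o := hμy.2.1
  have hφG : μy * τ ∈ M.G := mul_mem hμyG hτG
  have hφo : (μy * τ) o = o := by rw [Equiv.Perm.mul_apply, hτo, hμyι]
  have hφι : (μy * τ) ι = ι := by rw [Equiv.Perm.mul_apply, hτι, hμyo]
  have key1 : ∀ μ : Equiv.Perm X, M.IsMuMap o ι ((μy * τ) x) μ →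
      μ = (μy * τ) * μx * (μy * τ)⁻¹ := fun μ hμ =>
    M.mu_unique o ι h0 hμ (M.mu_conj_fix o ι hφG hφo hφι hμx)
  refine ⟨key1, ?_, ?_⟩
  · intro μxt μnx hμxt hμnx
    have h2 : M.IsMuMap o ι (τ x) (τ * μnx * τ⁻¹) := by
      have := M.mu_conj_swap o ι h0 hτG hτo hτι hμnx (inv_mem hαU) rfl
      rwa [inv_inv, hαo] at this
    have h3 : μxt = τ * μnx * τ⁻¹ := M.mu_unique o ι h0 hμxt h2
    rw [h3]; group
  · intro μ μxt μny hμ hμxt hμny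
    have e1 : μ = (μy * τ) * μx * (μy * τ)⁻¹ := key1 μ hμ
    have e2 : μny = μy⁻¹ :=
      M.mu_unique o ι h0 hμny (M.mu_inv o ι h0 hμy hαyU hαyo)
    have e3 : μxt = τ * μx⁻¹ * τ⁻¹ := by
      have hx' : M.IsMuMap o ι (α⁻¹ o) μx⁻¹ := M.mu_inv o ι h0 hμx hαU hαo
      have h2 := M.mu_conj_swap o ι h0 hτG hτo hτι hx' (inv_mem hαU) rfl
      rw [inv_inv, hαo] at h2
      exact M.mu_unique o ι h0 hμxt h2
    rw [e1, e2, e3]; group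
end

section
/- In a local Moufang set, the little projective group decomposes as the disjoint union G = U_0 G_{0,∞} U_∞ ∪ U_0 G_{0,∞} τ U_0°, where G_{0,∞} is the stabilizer of both 0 and ∞, τ is a fixed μ-map, and U_0° is the kernel of U_0 acting on equivalence classes; moreover the expression of any g in either piece as such a product is unique. -/
open Equiv

section Helpers

lemma perm_inv_fix {X : Type*} {σ : Equiv.Perm X} {x : X} (h : σ x = x) : σ⁻¹ x = x := by
  conv_lhs => rw [← h]
  simp

namespace LocalMoufangSet

variable {X : Type*} (M : LocalMoufangSet X)

lemma mem_G_of_mem_U {x : X} {u : Equiv.Perm X} (h : u ∈ M.U x) : u ∈ M.G :=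
  (le_iSup (fun x => M.U x) x) h

lemma inv_fix {x : X} {u : Equiv.Perm X} (hu : u ∈ M.U x) : u⁻¹ x = x :=
  M.lm2_fix x u⁻¹ (inv_mem hu)

lemma G_preserves {g : Equiv.Perm X} (hg : g ∈ M.G) :
    ∀ a b : X, M.r a b ↔ M.r (g a) (g b) := by
  let S : Subgroup (Equiv.Perm X) :=
  { carrier := {g | ∀ a b : X, M.r a b ↔ M.r (g a) (g b)}
    one_mem' := by intro a b; simp
    mul_mem' := by
      intro g h hg hh a b
      simp only [Set.mem_setOf_eq] at *
      rw [hh a b, hg (h a) (h b)]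
      simp [Equiv.Perm.mul_apply]
    inv_mem' := by
      intro g hg a b
      simp only [Set.mem_setOf_eq] at *
      simpa using (hg (g⁻¹ a) (g⁻¹ b)).symm }
  have hle : M.G ≤ S := iSup_le fun x => fun u hu => M.preserves x u hu
  exact hle hg

end LocalMoufangSet

end Helpers


/-- the Bruhat-like decomposition
`G = U_0 G_{0,∞} U_∞ ∪ U_0 G_{0,∞} τ U_0°` (disjoint, with unique expressions).
Left-action convention: the right product `u_0 h u_∞` is `u_∞ * h * u_0` and
`u_0 h τ u_0°` is `u_0° * τ * h * u_0`; `U_0°` consists of the `c ∈ U_0` with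
`r (c z) z` for all `z`. -/
theorem stmt9 {X : Type*} (M : LocalMoufangSet X) (o ι : X) (h0 : ¬ M.r o ι)
    (e : X) (he : M.IsUnitPt o ι e)
    (τ : Equiv.Perm X) (hτ : M.IsMuMap o ι e τ) :
    (∀ g ∈ M.G,
      (∃ a ∈ M.U o, ∃ h ∈ M.G, h o = o ∧ h ι = ι ∧ ∃ b ∈ M.U ι, g = b * h * a) ∨
      (∃ a ∈ M.U o, ∃ h ∈ M.G, h o = o ∧ h ι = ι ∧
        ∃ c ∈ M.U o, (∀ z : X, M.r (c z) z) ∧ g = c * τ * h * a)) ∧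
    (∀ g : Equiv.Perm X,
      ¬ ((∃ a ∈ M.U o, ∃ h ∈ M.G, h o = o ∧ h ι = ι ∧ ∃ b ∈ M.U ι, g = b * h * a) ∧
         (∃ a ∈ M.U o, ∃ h ∈ M.G, h o = o ∧ h ι = ι ∧
           ∃ c ∈ M.U o, (∀ z : X, M.r (c z) z) ∧ g = c * τ * h * a))) ∧
    (∀ a a' h h' b b' : Equiv.Perm X,
      a ∈ M.U o → a' ∈ M.U o → h ∈ M.G → h' ∈ M.G →
      h o = o → h ι = ι → h' o = o → h' ι = ι → b ∈ M.U ι → b' ∈ M.U ι →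
      b * h * a = b' * h' * a' → a = a' ∧ h = h' ∧ b = b') ∧
    (∀ a a' h h' c c' : Equiv.Perm X,
      a ∈ M.U o → a' ∈ M.U o → h ∈ M.G → h' ∈ M.G →
      h o = o → h ι = ι → h' o = o → h' ι = ι →
      c ∈ M.U o → c' ∈ M.U o → (∀ z : X, M.r (c z) z) → (∀ z : X, M.r (c' z) z) →
      c * τ * h * a = c' * τ * h' * a' → a = a' ∧ h = h' ∧ c = c') := by
  obtain ⟨hτo, hτι, α, hαι, hαo, g', hg', h', hh', hτeq⟩ := hτ
  have hτG : τ ∈ M.G := by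
    rw [hτeq]
    exact mul_mem (mul_mem (M.mem_G_of_mem_U hh') (M.mem_G_of_mem_U hαι)) (M.mem_G_of_mem_U hg')
  have h0' : ¬ M.r ι o := fun h => h0 (M.requiv.symm h)
  have hτinv : τ⁻¹ ι = o := by rw [← hτo]; simp
  -- a key fact: (b * h * a)⁻¹ ι = a⁻¹ ι  when h ι = ι and b⁻¹ ι = ι
  have key : ∀ (a h b : Equiv.Perm X), h ι = ι → b⁻¹ ι = ι →
      (b * h * a)⁻¹ ι = a⁻¹ ι := by
    intro a h b hhι hb
    have hh : h⁻¹ ι = ι := perm_inv_fix hhι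
    simp [mul_inv_rev, Equiv.Perm.mul_apply, hb, hh]
  -- non-relation facts for elements of U o and U ι
  have hUo_nr : ∀ {a : Equiv.Perm X}, a ∈ M.U o → ¬ M.r (a⁻¹ ι) o := by
    intro a haU hr
    have := (M.preserves o a haU (a⁻¹ ι) o).mp hr
    rw [M.lm2_fix o a haU] at this
    simp only [Equiv.Perm.coe_inv, Equiv.apply_symm_apply] at this
    exact h0' this
  have hUι_nr : ∀ {b : Equiv.Perm X}, b ∈ M.U ι → ¬ M.r (b o) ι := by
    intro b hbU hr
    have hbι : b ι = ι := M.lm2_fix ι b hbU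
    exact h0 ((M.preserves ι b hbU o ι).mpr (by rwa [hbι]))
  refine ⟨?_, ?_, ?_, ?_⟩
  · -- existence
    intro g hg
    by_cases hcase : M.r (g o) ι
    · right
      have hgoo : ¬ M.r (g o) o := fun h => h0' (M.requiv.trans (M.requiv.symm hcase) h)
      obtain ⟨c, ⟨hcU, hcι⟩, -⟩ := M.lm2_trans o ι (g o) h0' hgoo
      have hc0 : ∀ z, M.r (c z) z :=
        M.lm2'_free o c hcU ι h0' (by rw [hcι]; exact hcase)
      set g₃ := τ⁻¹ * (c⁻¹ * g) with hg₃
      have hg₃G : g₃ ∈ M.G :=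
        mul_mem (inv_mem hτG) (mul_mem (inv_mem (M.mem_G_of_mem_U hcU)) hg)
      have hcinv : c⁻¹ (g o) = ι := by rw [← hcι]; simp
      have hg₃o : g₃ o = o := by
        simp [hg₃, Equiv.Perm.mul_apply, hcinv, hτinv]
      have hp : ¬ M.r (g₃⁻¹ ι) o := by
        intro h
        have := (M.G_preserves hg₃G (g₃⁻¹ ι) o).mp h
        rw [hg₃o] at this
        simp only [Equiv.Perm.coe_inv, Equiv.apply_symm_apply] at this
        exact h0' this
      obtain ⟨a, ⟨haU, haι⟩, -⟩ := M.lm2_trans o (g₃⁻¹ ι) ι hp h0'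
      refine ⟨a, haU, g₃ * a⁻¹,
        mul_mem hg₃G (inv_mem (M.mem_G_of_mem_U haU)), ?_, ?_, c, hcU, hc0, ?_⟩
      · simp [Equiv.Perm.mul_apply, M.inv_fix haU, hg₃o]
      · have h1 : a⁻¹ ι = g₃⁻¹ ι := by
          simpa using (congrArg (fun z => a⁻¹ z) haι).symm
        simp [Equiv.Perm.mul_apply, h1]
      · rw [hg₃]; group
    · left
      have hp : ¬ M.r (g⁻¹ ι) o := by
        intro h
        have := (M.G_preserves hg (g⁻¹ ι) o).mp h
        simp only [Equiv.Perm.coe_inv, Equiv.apply_symm_apply] at this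
        exact hcase (M.requiv.symm this)
      obtain ⟨a, ⟨haU, haι⟩, -⟩ := M.lm2_trans o (g⁻¹ ι) ι hp h0'
      obtain ⟨b, ⟨hbU, hbo⟩, -⟩ := M.lm2_trans ι o (g o) h0 hcase
      refine ⟨a, haU, b⁻¹ * g * a⁻¹,
        mul_mem (mul_mem (inv_mem (M.mem_G_of_mem_U hbU)) hg) (inv_mem (M.mem_G_of_mem_U haU)),
        ?_, ?_, b, hbU, ?_⟩
      · have : b⁻¹ (g o) = o := by rw [← hbo]; simp
        simp [Equiv.Perm.mul_apply, M.inv_fix haU, this]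
      · have h1 : a⁻¹ ι = g⁻¹ ι := by
          simpa using (congrArg (fun z => a⁻¹ z) haι).symm
        simp [Equiv.Perm.mul_apply, h1, M.inv_fix hbU]
      · group
  · -- disjointness
    rintro g ⟨⟨a, haU, h, hG, hho, hhι, b, hbU, hgeq⟩,
      ⟨a', ha'U, h', h'G, h'o, h'ι, c, hcU, hc0, hgeq'⟩⟩
    have h1 : g o = b o := by
      rw [hgeq]; simp [Equiv.Perm.mul_apply, M.lm2_fix o a haU, hho]
    have h2 : g o = c ι := by
      rw [hgeq']; simp [Equiv.Perm.mul_apply, M.lm2_fix o a' ha'U, h'o, hτo]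
    have h3 : ¬ M.r (b o) ι := hUι_nr hbU
    exact h3 (by rw [← h1, h2]; exact hc0 ι)
  · -- uniqueness, first piece
    intro a a' h h' b b' haU ha'U hhG hh'G hho hhι h'o h'ι hbU hb'U heq
    have hk : a⁻¹ ι = a'⁻¹ ι := by
      rw [← key a h b hhι (M.inv_fix hbU), ← key a' h' b' h'ι (M.inv_fix hb'U), heq]
    have ha : a = a' := by
      obtain ⟨u, -, huniq⟩ := M.lm2_trans o (a⁻¹ ι) ι (hUo_nr haU) h0'
      rw [huniq a ⟨haU, by simp⟩, huniq a' ⟨ha'U, by rw [hk]; simp⟩]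
    subst ha
    have heq2 : b * h = b' * h' := mul_right_cancel heq
    have hb : b o = b' o := by
      have := congrArg (fun σ : Equiv.Perm X => σ o) heq2
      simpa [Equiv.Perm.mul_apply, hho, h'o] using this
    have hbb : b = b' := by
      obtain ⟨u, -, huniq⟩ := M.lm2_trans ι o (b o) h0 (hUι_nr hbU)
      rw [huniq b ⟨hbU, rfl⟩, huniq b' ⟨hb'U, hb.symm⟩]
    subst hbb
    exact ⟨rfl, mul_left_cancel heq2, rfl⟩
  · -- uniqueness, second piece
    intro a a' h h' c c' haU ha'U hhG hh'G hho hhι h'o h'ι hcU hc'U hc0 hc'0 heq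
    have hc : c ι = c' ι := by
      have := congrArg (fun σ : Equiv.Perm X => σ o) heq
      simpa [Equiv.Perm.mul_apply, M.lm2_fix o a haU, M.lm2_fix o a' ha'U,
        hho, h'o, hτo] using this
    have hcnr : ¬ M.r (c ι) o := fun hr =>
      h0' (M.requiv.trans (M.requiv.symm (hc0 ι)) hr)
    have hcc : c = c' := by
      obtain ⟨u, -, huniq⟩ := M.lm2_trans o ι (c ι) h0' hcnr
      rw [huniq c ⟨hcU, rfl⟩, huniq c' ⟨hc'U, hc.symm⟩]
    subst hcc
    have heq2 : h * a = h' * a' := by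
      have h3 : (c * τ) * (h * a) = (c * τ) * (h' * a') := by
        rw [← mul_assoc, ← mul_assoc]; exact heq
      exact mul_left_cancel h3
    have hk : a⁻¹ ι = a'⁻¹ ι := by
      have h1 : (h * a)⁻¹ ι = a⁻¹ ι := by
        simp [mul_inv_rev, Equiv.Perm.mul_apply, perm_inv_fix hhι]
      have h2 : (h' * a')⁻¹ ι = a'⁻¹ ι := by
        simp [mul_inv_rev, Equiv.Perm.mul_apply, perm_inv_fix h'ι]
      rw [← h1, ← h2, heq2]
    have ha : a = a' := by
      obtain ⟨u, -, huniq⟩ := M.lm2_trans o (a⁻¹ ι) ι (hUo_nr haU) h0'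
      rw [huniq a ⟨haU, by simp⟩, huniq a' ⟨ha'U, by rw [hk]; simp⟩]
    subst ha
    exact ⟨rfl, mul_right_cancel heq2, rfl⟩
end
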